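/- Let h(u) = (1/(2π))·(√(1 − u²) + (π − arccos u)·u), so that h'(u) = (π − arccos u)/(2π). Then the function u ↦ h'(u)/u is convex on (0, 1), and for every u ∈ (1/√2, 1), √2·h'(1/√2) > h'(u)/u. -/

import Mathlib

open Real

lemma hasDerivAt_invsqrt {x : ℝ} (h1 : -1 < x) (h2 : x < 1) :
    HasDerivAt (fun y : ℝ => (Real.sqrt (1 - y ^ 2))⁻¹)
      (x * ((Real.sqrt (1 - x ^ 2)) ^ 3)⁻¹) x := by
  have hx2 : (0:ℝ) < 1 - x ^ 2 := by nlinarith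
  have hs : 0 < Real.sqrt (1 - x ^ 2) := Real.sqrt_pos.2 hx2
  have hd1 : HasDerivAt (fun y : ℝ => 1 - y ^ 2) (-(2 * x)) x := by
    simpa using (hasDerivAt_pow 2 x).const_sub 1
  have hd2 : HasDerivAt (fun y : ℝ => Real.sqrt (1 - y ^ 2))
      (1 / (2 * Real.sqrt (1 - x ^ 2)) * -(2 * x)) x :=
    (Real.hasDerivAt_sqrt hx2.ne').comp x hd1
  have hd3 := hd2.inv hs.ne'
  refine HasDerivAt.congr_deriv hd3 ?_
  generalize Real.sqrt (1 - x ^ 2) = s at hs ⊢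
  field_simp

lemma hasDerivAt_piSubArccos {x : ℝ} (h1 : -1 < x) (h2 : x < 1) :
    HasDerivAt (fun y : ℝ => π - Real.arccos y) ((Real.sqrt (1 - x ^ 2))⁻¹) x := by
  simpa using (Real.hasDerivAt_arccos h1.ne' h2.ne).const_sub π

lemma hasDerivAt_negInvSq {x : ℝ} (hx : x ≠ 0) :
    HasDerivAt (fun y : ℝ => -((y ^ 2)⁻¹)) (2 * x / (x ^ 2) ^ 2) x := by
  have := ((hasDerivAt_pow 2 x).inv (pow_ne_zero 2 hx)).neg
  refine HasDerivAt.congr_deriv this ?_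
  push_cast
  ring

lemma key_ineq {x s : ℝ} (hx0 : 0 < x) (hx1 : x < 1) (hs : 0 < s) (hs1 : s ≤ 1)
    (h : s ^ 2 = 1 - x ^ 2) : 2 * x - 3 * x ^ 3 ≤ π * s ^ 3 := by
  nlinarith [Real.pi_gt_three, sq_nonneg (s - x), sq_nonneg (3 * s ^ 2 - 1),
    sq_nonneg (π * s - 2), mul_pos hs hs, mul_pos hx0 hx0,
    mul_pos (mul_pos hs hs) hs, mul_nonneg (mul_nonneg hs.le hs.le) hx0.le]

lemma convexG : ConvexOn ℝ (Set.Ioo (0:ℝ) 1) (fun u => (π - Real.arccos u) * u⁻¹) := by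
  refine convexOn_of_hasDerivWithinAt2_nonneg (f' := fun u =>
      (Real.sqrt (1 - u ^ 2))⁻¹ * u⁻¹ + (π - Real.arccos u) * -((u ^ 2)⁻¹))
    (f'' := fun u =>
      (u * ((Real.sqrt (1 - u ^ 2)) ^ 3)⁻¹ * u⁻¹ + (Real.sqrt (1 - u ^ 2))⁻¹ * -((u ^ 2)⁻¹)) +
      ((Real.sqrt (1 - u ^ 2))⁻¹ * -((u ^ 2)⁻¹) + (π - Real.arccos u) * (2 * u / (u ^ 2) ^ 2)))
    (convex_Ioo 0 1) ?_ ?_ ?_ ?_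
  · intro x hx
    exact (((continuous_const.sub Real.continuous_arccos).continuousAt).mul
      (continuousAt_inv₀ hx.1.ne')).continuousWithinAt
  · rw [interior_Ioo]
    intro x hx
    have h1 : (-1:ℝ) < x := by linarith [hx.1]
    exact (((hasDerivAt_piSubArccos h1 hx.2).mul (hasDerivAt_inv hx.1.ne')).hasDerivWithinAt)
  · rw [interior_Ioo]
    intro x hx
    have h1 : (-1:ℝ) < x := by linarith [hx.1]
    exact ((((hasDerivAt_invsqrt h1 hx.2).mul (hasDerivAt_inv hx.1.ne')).add
      ((hasDerivAt_piSubArccos h1 hx.2).mul (hasDerivAt_negInvSq hx.1.ne'))).hasDerivWithinAt)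
  · rw [interior_Ioo]
    intro x hx
    obtain ⟨hx0, hx1⟩ := hx
    have hx2 : (0:ℝ) < 1 - x ^ 2 := by nlinarith
    have hs : 0 < Real.sqrt (1 - x ^ 2) := Real.sqrt_pos.2 hx2
    have hs2 : Real.sqrt (1 - x ^ 2) ^ 2 = 1 - x ^ 2 := Real.sq_sqrt hx2.le
    have hs1 : Real.sqrt (1 - x ^ 2) ≤ 1 := by nlinarith
    have ha : 0 ≤ Real.arcsin x := Real.arcsin_nonneg.2 hx0.le
    have harc : π - Real.arccos x = π / 2 + Real.arcsin x := by
      rw [Real.arccos_eq_pi_div_two_sub_arcsin]; ring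
    have key := key_ineq hx0 hx1 hs hs1 hs2
    set s := Real.sqrt (1 - x ^ 2) with hsdef
    set a := Real.arcsin x with hadef
    have hnum : 0 ≤ (x ^ 3 - 2 * x * s ^ 2) * (s ^ 3)⁻¹ + (π + 2 * a) := by
      have e1 : x ^ 3 - 2 * x * s ^ 2 = 3 * x ^ 3 - 2 * x := by
        linear_combination (-2 * x) * hs2
      have h3 : (0:ℝ) < s ^ 3 := by positivity
      have e2 : (2 * x - 3 * x ^ 3) / s ^ 3 ≤ π := (div_le_iff₀ h3).mpr (by linarith)
      have e3 : (x ^ 3 - 2 * x * s ^ 2) * (s ^ 3)⁻¹ = -((2 * x - 3 * x ^ 3) / s ^ 3) := by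
        rw [e1]; ring
      rw [e3]
      linarith
    have hfin : x * (s ^ 3)⁻¹ * x⁻¹ + s⁻¹ * -((x ^ 2)⁻¹) +
        (s⁻¹ * -((x ^ 2)⁻¹) + (π - Real.arccos x) * (2 * x / (x ^ 2) ^ 2)) =
        ((x ^ 3 - 2 * x * s ^ 2) * (s ^ 3)⁻¹ + (π + 2 * a)) / x ^ 3 := by
      rw [harc]
      field_simp
      ring
    rw [hfin]
    positivity

lemma strictConvexOn_arcsin01 : StrictConvexOn ℝ (Set.Icc (0:ℝ) 1) Real.arcsin := by
  apply strictConvexOn_of_deriv2_pos (convex_Icc 0 1) Real.continuous_arcsin.continuousOn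
  intro x hx
  rw [interior_Icc] at hx
  obtain ⟨hx0, hx1⟩ := hx
  have hiter : deriv^[2] Real.arcsin x = deriv (deriv Real.arcsin) x := rfl
  rw [hiter, Real.deriv_arcsin]
  have hd := hasDerivAt_invsqrt (by linarith : (-1:ℝ) < x) hx1
  have hderiv : deriv (fun y : ℝ => 1 / Real.sqrt (1 - y ^ 2)) x
      = x * ((Real.sqrt (1 - x ^ 2)) ^ 3)⁻¹ := by
    simp only [one_div]
    exact hd.deriv
  rw [hderiv]
  have hs : 0 < Real.sqrt (1 - x ^ 2) := Real.sqrt_pos.2 (by nlinarith)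
  positivity

/-- The ReLU interaction kernel `h(u) = (1/(2π))(√(1−u²) + (π − arccos u)u)`,
whose derivative is `h'(u) = (π − arccos u)/(2π)`. -/
noncomputable def hreluDeriv (u : ℝ) : ℝ := (π - Real.arccos u) / (2 * π)

/-- `h'(u)/u` is convex on `(0, 1)`, and for `u ∈ (1/√2, 1)` one has
`√2·h'(1/√2) > h'(u)/u`. -/
theorem hrelu_deriv_ratio_convex :
    ConvexOn ℝ (Set.Ioo (0 : ℝ) 1) (fun u => hreluDeriv u / u) ∧
    ∀ u ∈ Set.Ioo (1 / Real.sqrt 2) (1 : ℝ),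
      hreluDeriv u / u < Real.sqrt 2 * hreluDeriv (1 / Real.sqrt 2) := by
  constructor
  · have heq : (fun u => hreluDeriv u / u)
        = fun u => (1 / (2 * π)) • ((π - Real.arccos u) * u⁻¹) := by
      funext u
      simp only [hreluDeriv, smul_eq_mul]
      ring
    rw [heq]
    exact convexG.smul (by positivity)
  · intro u hu
    have hs2 : Real.sqrt 2 * Real.sqrt 2 = 2 := Real.mul_self_sqrt (by norm_num)
    have hs2pos : (0:ℝ) < Real.sqrt 2 := Real.sqrt_pos.2 (by norm_num)
    have h12 : (1 / Real.sqrt 2 : ℝ) = Real.sqrt 2 / 2 := by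
      rw [div_eq_div_iff hs2pos.ne' (two_ne_zero)]
      linarith [hs2]
    rw [h12] at hu ⊢
    obtain ⟨hul, hur⟩ := hu
    have hπ : (0:ℝ) < π := Real.pi_pos
    have hr1 : (1:ℝ) < Real.sqrt 2 := by nlinarith
    have hr2 : Real.sqrt 2 < 2 := by nlinarith
    have ha0 : (0:ℝ) < Real.sqrt 2 / 2 := by positivity
    have ha_lt : (Real.sqrt 2 / 2 : ℝ) < 1 := by linarith
    have hu0 : 0 < u := lt_trans ha0 hul
    -- arcsin (√2/2) = π/4
    have harcsin_a : Real.arcsin (Real.sqrt 2 / 2) = π / 4 := by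
      rw [← Real.sin_pi_div_four]
      exact Real.arcsin_sin (by linarith) (by linarith)
    -- strict convexity bound
    have hd : (0:ℝ) < 1 - Real.sqrt 2 / 2 := by linarith
    set d : ℝ := 1 - Real.sqrt 2 / 2 with hddef
    set lam : ℝ := (1 - u) / d with hlam
    set mu : ℝ := (u - Real.sqrt 2 / 2) / d with hmu
    have hlam0 : 0 < lam := div_pos (by linarith) hd
    have hmu0 : 0 < mu := div_pos (by linarith) hd
    have hsum : lam + mu = 1 := by
      rw [hlam, hmu, ← add_div, div_eq_one_iff_eq hd.ne', hddef]
      ring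
    have hcomb : lam • (Real.sqrt 2 / 2) + mu • (1:ℝ) = u := by
      simp only [smul_eq_mul, hlam, hmu, mul_one]
      rw [div_mul_eq_mul_div, ← add_div, div_eq_iff hd.ne', hddef]
      ring
    have hconv := strictConvexOn_arcsin01.2 (x := Real.sqrt 2 / 2) (y := 1)
      ⟨ha0.le, ha_lt.le⟩ ⟨by norm_num, le_refl 1⟩ (ne_of_lt ha_lt) hlam0 hmu0 hsum
    rw [hcomb] at hconv
    rw [harcsin_a, Real.arcsin_one] at hconv
    simp only [smul_eq_mul] at hconv
    -- key linear bound : arcsin u < 3√2π/4 * u - π/2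
    have hkey : Real.arcsin u < 3 * Real.sqrt 2 * π / 4 * u - π / 2 := by
      have hfact : (0:ℝ) ≤ (3 * Real.sqrt 2 / 4 - 1) * (u - Real.sqrt 2 / 2) :=
        mul_nonneg (by nlinarith) (by linarith)
      have hbound : lam * (π / 4) + mu * (π / 2) ≤ 3 * Real.sqrt 2 * π / 4 * u - π / 2 := by
        rw [hlam, hmu, div_mul_eq_mul_div, div_mul_eq_mul_div, ← add_div,
          div_le_iff₀ hd, hddef]
        have e1 : (Real.sqrt 2 * Real.sqrt 2) * (π * u) = 2 * (π * u) := by rw [hs2]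
        have e2 : (Real.sqrt 2 * Real.sqrt 2) * π = 2 * π := by rw [hs2]
        nlinarith [mul_nonneg hfact hπ.le, e1, e2]
      linarith
    -- conclude
    have harccos_a : Real.arccos (Real.sqrt 2 / 2) = π / 4 := by
      rw [Real.arccos_eq_pi_div_two_sub_arcsin, harcsin_a]
      ring
    have h8 : hreluDeriv (Real.sqrt 2 / 2) = 3 / 8 := by
      rw [hreluDeriv, harccos_a]
      field_simp [Real.pi_ne_zero]
      ring
    rw [h8]
    have harcu : π - Real.arccos u = π / 2 + Real.arcsin u := by
      rw [Real.arccos_eq_pi_div_two_sub_arcsin]; ring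
    rw [hreluDeriv, harcu, div_div, div_lt_iff₀ (by positivity : (0:ℝ) < 2 * π * u)]
    nlinarith [hkey, hπ]
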